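/- The function W_+(φ) = (s/3)|λ(ξφ)|³ with λ(y) = max(0,y−1)+min(0,y+1), s > 0, ξ > 0, is convex on ℝ, and the function W_−(φ) = (1/2)(1 − (ξφ)²) + δ is concave on ℝ. Hence W^s = W_+ + W_− is a splitting of the relaxed double obstacle energy into a convex and a concave part. -/
import Mathlib

noncomputable def lam (y : ℝ) : ℝ := max 0 (y - 1) + min 0 (y + 1)

noncomputable def Wplus (s ξ : ℝ) (φ : ℝ) : ℝ := (s / 3) * |lam (ξ * φ)| ^ 3

noncomputable def Wminus (ξ δ : ℝ) (φ : ℝ) : ℝ := (1 / 2) * (1 - (ξ * φ) ^ 2) + δ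

noncomputable def Ws (s ξ δ : ℝ) (y : ℝ) : ℝ :=
  (1 / 2) * (1 - (ξ * y) ^ 2) + (s / 3) * |lam (ξ * y)| ^ 3 + δ

lemma abs_lam_eq (y : ℝ) : |lam y| = max (|y| - 1) 0 := by
  unfold lam
  rcases le_total y (-1) with h | h
  · rw [max_eq_left (by linarith), min_eq_right (by linarith),
      abs_of_nonpos (by linarith), abs_of_nonpos (by linarith),
      max_eq_left (by linarith)]
    ring
  rcases le_total y 1 with h' | h'
  · rw [max_eq_left (by linarith), min_eq_left (by linarith)]
    rw [max_eq_right]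
    · simp
    · rcases le_total y 0 with h'' | h''
      · rw [abs_of_nonpos h'']; linarith
      · rw [abs_of_nonneg h'']; linarith
  · rw [max_eq_right (by linarith), min_eq_left (by linarith),
      abs_of_nonneg (by linarith), abs_of_nonneg (by linarith),
      max_eq_left (by linarith)]
    ring

lemma cube_convex {h : ℝ → ℝ} (hc : ConvexOn ℝ Set.univ h) (hn : ∀ x, 0 ≤ h x) :
    ConvexOn ℝ Set.univ (fun x => h x ^ 3) := by
  refine ⟨convex_univ, ?_⟩
  intro x _ y _ a b ha hb hab
  have h1 : h (a • x + b • y) ≤ a * h x + b * h y := hc.2 trivial trivial ha hb hab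
  have h2 : (h (a • x + b • y)) ^ 3 ≤ (a * h x + b * h y) ^ 3 :=
    pow_le_pow_left₀ (hn _) h1 3
  have h3 := (convexOn_pow (𝕜 := ℝ) 3).2 (Set.mem_Ici.2 (hn x)) (Set.mem_Ici.2 (hn y)) ha hb hab
  simp only [smul_eq_mul] at h1 h2 h3 ⊢
  linarith

/-- `W_+` is convex on ℝ, `W_−` is concave on ℝ, and
`W^s = W_+ + W_−` is a convex–concave splitting. -/
theorem Ws_splitting (s ξ δ : ℝ) (hs : 0 < s) (hξ : 0 < ξ) :
    ConvexOn ℝ Set.univ (Wplus s ξ) ∧ ConcaveOn ℝ Set.univ (Wminus ξ δ) ∧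
      ∀ y : ℝ, Ws s ξ δ y = Wplus s ξ y + Wminus ξ δ y := by
  refine ⟨?_, ?_, ?_⟩
  · -- convexity of Wplus
    have habs : ConvexOn ℝ Set.univ (fun φ : ℝ => |ξ * φ| - 1) := by
      refine ⟨convex_univ, ?_⟩
      intro x _ y _ a b ha hb hab
      simp only [smul_eq_mul]
      have : |ξ * (a * x + b * y)| ≤ a * |ξ * x| + b * |ξ * y| := by
        calc |ξ * (a * x + b * y)| = |a * (ξ * x) + b * (ξ * y)| := by ring_nf
          _ ≤ |a * (ξ * x)| + |b * (ξ * y)| := abs_add_le _ _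
          _ = a * |ξ * x| + b * |ξ * y| := by
              rw [abs_mul a, abs_mul b, abs_of_nonneg ha, abs_of_nonneg hb]
      nlinarith
    have hmax : ConvexOn ℝ Set.univ (fun φ : ℝ => max (|ξ * φ| - 1) 0) :=
      habs.sup (convexOn_const 0 convex_univ)
    have hcube := cube_convex hmax (fun x => le_max_right _ _)
    have hsmul := hcube.smul (c := s / 3) (by positivity)
    have : Wplus s ξ = fun φ => (s / 3) • (max (|ξ * φ| - 1) 0) ^ 3 := by
      funext φ
      rw [Wplus, abs_lam_eq, smul_eq_mul]
    rw [this]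
    exact hsmul
  · refine ⟨convex_univ, ?_⟩
    intro x _ y _ a b ha hb hab
    simp only [Wminus, smul_eq_mul]
    have key : (ξ * (a * x + b * y)) ^ 2 =
        a * (ξ * x) ^ 2 + b * (ξ * y) ^ 2 - a * b * (ξ * x - ξ * y) ^ 2 := by
      linear_combination (ξ ^ 2 * x ^ 2 * a + ξ ^ 2 * y ^ 2 * b) * hab
    have hnn : 0 ≤ a * b * (ξ * x - ξ * y) ^ 2 :=
      mul_nonneg (mul_nonneg ha hb) (sq_nonneg _)
    have hd : a * δ + b * δ = δ := by linear_combination δ * hab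
    have h1 : a * (1/2 : ℝ) + b * (1/2) = 1/2 := by linear_combination (1/2 : ℝ) * hab
    nlinarith [hd, h1]
  · intro y
    simp only [Ws, Wplus, Wminus]
    ring
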